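/- Let B = b::B' be bids sorted descending by competitiveness and A = a::A' be asks sorted ascending by competitiveness (a is the least competitive ask), with p_b ≥ p_a. If M' is a matching between B and A with Q(b, M') ≥ q where q = min(q_b, q_a), then there exists a matching M'' between B and A with Q(M'') = Q(M') and Q(a ↔ b, M'') = q. -/

import Mathlib

structure Bid where
  id : ℕ
  timestamp : ℕ
  quantity : ℕ
  price : ℕ
deriving DecidableEq

structure Ask where
  id : ℕ
  timestamp : ℕ
  quantity : ℕ
  price : ℕ
deriving DecidableEq

structure Transaction where
  bid : Bid
  ask : Ask
  quantity : ℕ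
  price : ℕ
deriving DecidableEq

/-- Total traded quantity of a list of transactions. -/
def Qty (M : List Transaction) : ℕ := (M.map Transaction.quantity).sum

/-- Total traded quantity of bid `b` in `M`. -/
def QtyBid (b : Bid) (M : List Transaction) : ℕ :=
  ((M.filter (fun m => m.bid == b)).map Transaction.quantity).sum

/-- Total traded quantity of ask `a` in `M`. -/
def QtyAsk (a : Ask) (M : List Transaction) : ℕ :=
  ((M.filter (fun m => m.ask == a)).map Transaction.quantity).sum

/-- Total traded quantity between bid `b` and ask `a` in `M`. -/
def QtyBidAsk (b : Bid) (a : Ask) (M : List Transaction) : ℕ :=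
  ((M.filter (fun m => m.bid == b && m.ask == a)).map Transaction.quantity).sum

/-- Sum of quantities of a list of bids. -/
def QB (B : List Bid) : ℕ := (B.map Bid.quantity).sum

/-- Sum of quantities of a list of asks. -/
def QA (A : List Ask) : ℕ := (A.map Ask.quantity).sum

/-- `M` is a matching between bids `B` and asks `A`. -/
def Matching (B : List Bid) (A : List Ask) (M : List Transaction) : Prop :=
  (∀ m ∈ M, m.ask.price ≤ m.bid.price) ∧
  (∀ m ∈ M, m.bid ∈ B) ∧
  (∀ m ∈ M, m.ask ∈ A) ∧
  (∀ b ∈ B, QtyBid b M ≤ b.quantity) ∧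
  (∀ a ∈ A, QtyAsk a M ≤ a.quantity)

/-- Individual rationality. -/
def IsIR (M : List Transaction) : Prop :=
  ∀ m ∈ M, m.ask.price ≤ m.price ∧ m.price ≤ m.bid.price

/-- Uniformity: all trade prices equal. -/
def IsUniform (M : List Transaction) : Prop :=
  ∀ m1 ∈ M, ∀ m2 ∈ M, m1.price = m2.price

/-- `b1` is more competitive than `b2`. -/
def MoreCompetitiveBid (b1 b2 : Bid) : Prop :=
  b2.price < b1.price ∨ (b1.price = b2.price ∧ b1.timestamp < b2.timestamp)

/-- `a1` is more competitive than `a2`. -/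
def MoreCompetitiveAsk (a1 a2 : Ask) : Prop :=
  a1.price < a2.price ∨ (a1.price = a2.price ∧ a1.timestamp < a2.timestamp)

def FairOnBids (B : List Bid) (M : List Transaction) : Prop :=
  ∀ b1 ∈ B, ∀ b2 ∈ B, MoreCompetitiveBid b1 b2 → 1 ≤ QtyBid b2 M →
    QtyBid b1 M = b1.quantity

def FairOnAsks (A : List Ask) (M : List Transaction) : Prop :=
  ∀ a1 ∈ A, ∀ a2 ∈ A, MoreCompetitiveAsk a1 a2 → 1 ≤ QtyAsk a2 M →
    QtyAsk a1 M = a1.quantity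

def IsFair (B : List Bid) (A : List Ask) (M : List Transaction) : Prop :=
  FairOnBids B M ∧ FairOnAsks A M

/-- "at least as competitive as" order on bids (for sorting, most competitive first). -/
def BidGE (b1 b2 : Bid) : Prop := ¬ MoreCompetitiveBid b2 b1

/-- "at least as competitive as" order on asks (for sorting, most competitive first). -/
def AskGE (a1 a2 : Ask) : Prop := ¬ MoreCompetitiveAsk a2 a1

/-- Generic filtered-sum of quantities. -/
def Sq (p : Transaction → Bool) (M : List Transaction) : ℕ :=
  ((M.filter p).map Transaction.quantity).sum

lemma Sq_cons (p : Transaction → Bool) (m : Transaction) (M : List Transaction) :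
    Sq p (m :: M) = (if p m then m.quantity else 0) + Sq p M := by
  by_cases h : p m <;> simp [Sq, List.filter_cons, h]

lemma Sq_perm (p : Transaction → Bool) {M N : List Transaction} (h : M.Perm N) :
    Sq p M = Sq p N := ((h.filter p).map _).sum_eq

lemma Sq_split (p r : Transaction → Bool) (h : ∀ m, p m = true → r m = true)
    (M : List Transaction) :
    Sq r M = Sq p M + Sq (fun m => r m && !p m) M := by
  induction M with
  | nil => rfl
  | cons m M ih =>
    rw [Sq_cons, Sq_cons, Sq_cons, ih]
    by_cases hp : p m
    · simp [hp, h m hp]; omega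
    · by_cases hr : r m <;> simp [hp, hr] <;> omega

lemma Sq_mono (p r : Transaction → Bool) (h : ∀ m, p m = true → r m = true)
    (M : List Transaction) : Sq p M ≤ Sq r M := by
  rw [Sq_split p r h M]; omega

lemma Sq_exists_pos (p : Transaction → Bool) (M : List Transaction) (h : 0 < Sq p M) :
    ∃ m ∈ M, p m = true ∧ 0 < m.quantity := by
  induction M with
  | nil => simp [Sq] at h
  | cons m M ih =>
    rw [Sq_cons] at h
    by_cases hp : p m
    · by_cases hq : 0 < m.quantity
      · exact ⟨m, List.mem_cons_self .., hp, hq⟩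
      · simp [hp] at h
        obtain ⟨m', hm', h1, h2⟩ := ih (by omega)
        exact ⟨m', List.mem_cons_of_mem _ hm', h1, h2⟩
    · simp [hp] at h
      obtain ⟨m', hm', h1, h2⟩ := ih h
      exact ⟨m', List.mem_cons_of_mem _ hm', h1, h2⟩

lemma QtyBid_eq_Sq (b : Bid) (M : List Transaction) :
    QtyBid b M = Sq (fun m => m.bid == b) M := rfl

lemma QtyAsk_eq_Sq (a : Ask) (M : List Transaction) :
    QtyAsk a M = Sq (fun m => m.ask == a) M := rfl

lemma QtyBidAsk_eq_Sq (b : Bid) (a : Ask) (M : List Transaction) :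
    QtyBidAsk b a M = Sq (fun m => m.bid == b && m.ask == a) M := rfl

lemma Qty_eq_Sq (M : List Transaction) : Qty M = Sq (fun _ => true) M := by
  simp [Qty, Sq]

lemma step_lemma (b : Bid) (B' : List Bid) (a : Ask) (A' : List Ask)
    (M : List Transaction)
    (hA : ∀ a1 ∈ A', a1.price ≤ a.price)
    (hp : a.price ≤ b.price)
    (hM : Matching (b :: B') (a :: A') M)
    (ht : QtyBidAsk b a M < min b.quantity a.quantity)
    (hb : min b.quantity a.quantity ≤ QtyBid b M) :
    ∃ M₂, Matching (b :: B') (a :: A') M₂ ∧ Qty M₂ = Qty M ∧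
      QtyBid b M₂ = QtyBid b M ∧ QtyBidAsk b a M₂ = QtyBidAsk b a M + 1 := by
  obtain ⟨hpr, hbm, ham, hbc, hac⟩ := hM
  -- find m₁ : a trade of b with another ask
  have himp1 : ∀ m : Transaction, (m.bid == b && m.ask == a) = true → (m.bid == b) = true := by
    intro m hm; simp at hm ⊢; exact hm.1
  have hsplit1 := Sq_split _ _ himp1 M
  have hpos1 : 0 < Sq (fun m => (m.bid == b) && !(m.bid == b && m.ask == a)) M := by
    rw [QtyBidAsk_eq_Sq] at ht; rw [QtyBid_eq_Sq] at hb; omega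
  obtain ⟨m₁, hm₁M, hm₁p, hm₁q⟩ := Sq_exists_pos _ _ hpos1
  simp only [Bool.and_eq_true, Bool.not_eq_true', Bool.and_eq_false_iff, beq_iff_eq,
    beq_eq_false_iff_ne] at hm₁p
  have hm₁b : m₁.bid = b := hm₁p.1
  have hm₁a : m₁.ask ≠ a := by
    rcases hm₁p.2 with h | h
    · exact absurd hm₁b h
    · exact h
  have hperm1 : M.Perm (m₁ :: M.erase m₁) := List.perm_cons_erase hm₁M
  have hm₁A : m₁.ask ∈ A' := by
    rcases List.mem_cons.mp (ham m₁ hm₁M) with h | h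
    · exact absurd h hm₁a
    · exact h
  by_cases hcase : QtyAsk a M < a.quantity
  · -- simple move: transfer one unit of m₁ to the pair (b, a)
    refine ⟨⟨b, a, 1, 0⟩ :: ⟨m₁.bid, m₁.ask, m₁.quantity - 1, m₁.price⟩ :: M.erase m₁, ?_, ?_, ?_, ?_⟩
    · refine ⟨?_, ?_, ?_, ?_, ?_⟩
      · intro m hm
        simp only [List.mem_cons] at hm
        rcases hm with hm | hm | hm
        · subst hm; exact hp
        · subst hm; exact hpr m₁ hm₁M
        · exact hpr m ((M.erase_sublist : List.Sublist (M.erase m₁) M).subset hm)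
      · intro m hm
        simp only [List.mem_cons] at hm
        rcases hm with hm | hm | hm
        · subst hm; exact List.mem_cons_self ..
        · subst hm; exact hbm m₁ hm₁M
        · exact hbm m ((M.erase_sublist : List.Sublist (M.erase m₁) M).subset hm)
      · intro m hm
        simp only [List.mem_cons] at hm
        rcases hm with hm | hm | hm
        · subst hm; exact List.mem_cons_self ..
        · subst hm; exact ham m₁ hm₁M
        · exact ham m ((M.erase_sublist : List.Sublist (M.erase m₁) M).subset hm)
      · intro b₂ hb₂
        have hold : QtyBid b₂ M = (if (m₁.bid == b₂) then m₁.quantity else 0)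
            + Sq (fun m => m.bid == b₂) (M.erase m₁) := by
          rw [QtyBid_eq_Sq, Sq_perm _ hperm1, Sq_cons]
        have h2 : QtyBid b₂ (⟨b, a, 1, 0⟩ :: ⟨m₁.bid, m₁.ask, m₁.quantity - 1, m₁.price⟩ :: M.erase m₁)
            ≤ QtyBid b₂ M := by
          rw [QtyBid_eq_Sq, Sq_cons, Sq_cons, hold]
          by_cases hbb : m₁.bid = b₂ <;> simp [hbb, hm₁b ▸ hbb] <;> omega
        exact le_trans h2 (hbc b₂ hb₂)
      · intro a₂ ha₂
        have hle := hac a₂ ha₂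
        have hold : QtyAsk a₂ M = (if (m₁.ask == a₂) then m₁.quantity else 0)
            + Sq (fun m => m.ask == a₂) (M.erase m₁) := by
          rw [QtyAsk_eq_Sq, Sq_perm _ hperm1, Sq_cons]
        rw [QtyAsk_eq_Sq, Sq_cons, Sq_cons]
        rw [hold] at hle
        by_cases haa : a = a₂
        · subst haa
          rw [QtyAsk_eq_Sq, Sq_perm _ hperm1, Sq_cons] at hcase
          simp [hm₁a] at hcase hle ⊢
          omega
        · by_cases hma : m₁.ask = a₂ <;> simp [haa, hma] at hle ⊢ <;> omega
    · rw [Qty_eq_Sq, Qty_eq_Sq, Sq_perm _ hperm1, Sq_cons, Sq_cons, Sq_cons]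
      simp; omega
    · rw [QtyBid_eq_Sq, QtyBid_eq_Sq, Sq_perm _ hperm1, Sq_cons, Sq_cons, Sq_cons]
      simp [hm₁b]; omega
    · rw [QtyBidAsk_eq_Sq, QtyBidAsk_eq_Sq, Sq_perm _ hperm1, Sq_cons, Sq_cons, Sq_cons]
      simp [hm₁a, hm₁b]; omega
  · -- cross swap: need a trade of a with another bid
    have himp2 : ∀ m : Transaction, (m.bid == b && m.ask == a) = true → (m.ask == a) = true := by
      intro m hm; simp at hm ⊢; exact hm.2
    have hsplit2 := Sq_split _ _ himp2 M
    have hpos2 : 0 < Sq (fun m => (m.ask == a) && !(m.bid == b && m.ask == a)) M := by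
      rw [QtyBidAsk_eq_Sq] at ht
      have h1 : a.quantity ≤ QtyAsk a M := by omega
      rw [QtyAsk_eq_Sq] at h1; omega
    obtain ⟨m₂, hm₂M, hm₂p, hm₂q⟩ := Sq_exists_pos _ _ hpos2
    simp only [Bool.and_eq_true, Bool.not_eq_true', Bool.and_eq_false_iff, beq_iff_eq,
      beq_eq_false_iff_ne] at hm₂p
    have hm₂a : m₂.ask = a := hm₂p.1
    have hm₂b : m₂.bid ≠ b := by
      rcases hm₂p.2 with h | h
      · exact h
      · exact absurd hm₂a h
    have hne : m₂ ≠ m₁ := fun h => hm₂b (h ▸ hm₁b)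
    have hm₂e : m₂ ∈ M.erase m₁ := (List.mem_erase_of_ne hne).mpr hm₂M
    have hperm2 : M.Perm (m₁ :: m₂ :: (M.erase m₁).erase m₂) :=
      hperm1.trans (List.Perm.cons m₁ (List.perm_cons_erase hm₂e))
    set R := (M.erase m₁).erase m₂ with hR
    have hsubR : ∀ m ∈ R, m ∈ M := fun m hm =>
      (M.erase_sublist : List.Sublist (M.erase m₁) M).subset (((M.erase m₁).erase_sublist : List.Sublist ((M.erase m₁).erase m₂) (M.erase m₁)).subset hm)
    refine ⟨⟨b, a, 1, 0⟩ :: ⟨m₂.bid, m₁.ask, 1, 0⟩ ::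
      ⟨m₁.bid, m₁.ask, m₁.quantity - 1, m₁.price⟩ ::
      ⟨m₂.bid, m₂.ask, m₂.quantity - 1, m₂.price⟩ :: R, ?_, ?_, ?_, ?_⟩
    · refine ⟨?_, ?_, ?_, ?_, ?_⟩
      · intro m hm
        simp only [List.mem_cons] at hm
        rcases hm with hm | hm | hm | hm | hm
        · subst hm; exact hp
        · subst hm; show m₁.ask.price ≤ m₂.bid.price
          have h1 : m₁.ask.price ≤ a.price := hA m₁.ask hm₁A
          have h2 : m₂.ask.price ≤ m₂.bid.price := hpr m₂ hm₂M
          rw [hm₂a] at h2; omega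
        · subst hm; exact hpr m₁ hm₁M
        · subst hm; exact hpr m₂ hm₂M
        · exact hpr m (hsubR m hm)
      · intro m hm
        simp only [List.mem_cons] at hm
        rcases hm with hm | hm | hm | hm | hm
        · subst hm; exact List.mem_cons_self ..
        · subst hm; exact hbm m₂ hm₂M
        · subst hm; exact hbm m₁ hm₁M
        · subst hm; exact hbm m₂ hm₂M
        · exact hbm m (hsubR m hm)
      · intro m hm
        simp only [List.mem_cons] at hm
        rcases hm with hm | hm | hm | hm | hm
        · subst hm; exact List.mem_cons_self ..
        · subst hm; exact ham m₁ hm₁M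
        · subst hm; exact ham m₁ hm₁M
        · subst hm; exact ham m₂ hm₂M
        · exact ham m (hsubR m hm)
      · intro b₂ hb₂
        have hold : QtyBid b₂ M = (if (m₁.bid == b₂) then m₁.quantity else 0)
            + ((if (m₂.bid == b₂) then m₂.quantity else 0) + Sq (fun m => m.bid == b₂) R) := by
          rw [QtyBid_eq_Sq, Sq_perm _ hperm2, Sq_cons, Sq_cons]
        have h2 : QtyBid b₂ (⟨b, a, 1, 0⟩ :: ⟨m₂.bid, m₁.ask, 1, 0⟩ ::
            ⟨m₁.bid, m₁.ask, m₁.quantity - 1, m₁.price⟩ ::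
            ⟨m₂.bid, m₂.ask, m₂.quantity - 1, m₂.price⟩ :: R) = QtyBid b₂ M := by
          rw [QtyBid_eq_Sq, Sq_cons, Sq_cons, Sq_cons, Sq_cons, hold]
          have eb : (b == b₂) = (m₁.bid == b₂) := by rw [hm₁b]
          by_cases h1 : m₁.bid = b₂ <;> by_cases h2 : m₂.bid = b₂ <;>
            simp [eb, h1, h2] <;> omega
        rw [h2]; exact hbc b₂ hb₂
      · intro a₂ ha₂
        have hold : QtyAsk a₂ M = (if (m₁.ask == a₂) then m₁.quantity else 0)
            + ((if (m₂.ask == a₂) then m₂.quantity else 0) + Sq (fun m => m.ask == a₂) R) := by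
          rw [QtyAsk_eq_Sq, Sq_perm _ hperm2, Sq_cons, Sq_cons]
        have h2 : QtyAsk a₂ (⟨b, a, 1, 0⟩ :: ⟨m₂.bid, m₁.ask, 1, 0⟩ ::
            ⟨m₁.bid, m₁.ask, m₁.quantity - 1, m₁.price⟩ ::
            ⟨m₂.bid, m₂.ask, m₂.quantity - 1, m₂.price⟩ :: R) = QtyAsk a₂ M := by
          rw [QtyAsk_eq_Sq, Sq_cons, Sq_cons, Sq_cons, Sq_cons, hold]
          have ea : (a == a₂) = (m₂.ask == a₂) := by rw [hm₂a]
          by_cases h1 : m₁.ask = a₂ <;> by_cases h2 : m₂.ask = a₂ <;>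
            simp [ea, h1, h2] <;> omega
        rw [h2]; exact hac a₂ ha₂
    · rw [Qty_eq_Sq, Qty_eq_Sq, Sq_perm _ hperm2]
      simp only [Sq_cons, if_true]
      omega
    · rw [QtyBid_eq_Sq, QtyBid_eq_Sq, Sq_perm _ hperm2]
      simp only [Sq_cons]
      have h1 : (m₂.bid == b) = false := by simp [hm₂b]
      simp [hm₁b, h1]; omega
    · rw [QtyBidAsk_eq_Sq, QtyBidAsk_eq_Sq, Sq_perm _ hperm2]
      simp only [Sq_cons]
      have h1 : (m₂.bid == b) = false := by simp [hm₂b]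
      have h2 : (m₁.ask == a) = false := by simp [hm₁a]
      simp [hm₁b, h1, h2]; omega

theorem statement_19 (b : Bid) (B' : List Bid) (a : Ask) (A' : List Ask)
    (M' : List Transaction)
    (hsB : List.Pairwise BidGE (b :: B'))
    (hsA : List.Pairwise (fun a1 a2 => ¬ MoreCompetitiveAsk a1 a2) (a :: A'))
    (hp : a.price ≤ b.price)
    (hM : Matching (b :: B') (a :: A') M')
    (hq : min b.quantity a.quantity ≤ QtyBid b M') :
    ∃ M'', Matching (b :: B') (a :: A') M'' ∧ Qty M'' = Qty M' ∧
      QtyBidAsk b a M'' = min b.quantity a.quantity := by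
  have hA : ∀ a1 ∈ A', a1.price ≤ a.price := by
    intro a1 h1
    have h2 := (List.pairwise_cons.mp hsA).1 a1 h1
    unfold MoreCompetitiveAsk at h2
    by_contra h3
    exact h2 (Or.inl (by omega))
  suffices H : ∀ n (M : List Transaction), Matching (b :: B') (a :: A') M →
      min b.quantity a.quantity ≤ QtyBid b M →
      min b.quantity a.quantity - QtyBidAsk b a M ≤ n →
      ∃ M'', Matching (b :: B') (a :: A') M'' ∧ Qty M'' = Qty M ∧
        QtyBidAsk b a M'' = min b.quantity a.quantity by
    exact H _ M' hM hq le_rfl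
  intro n
  induction n with
  | zero =>
    intro M hM hb hn
    have hle : QtyBidAsk b a M ≤ min b.quantity a.quantity := by
      have h1 : QtyBidAsk b a M ≤ QtyBid b M := by
        rw [QtyBidAsk_eq_Sq, QtyBid_eq_Sq]
        exact Sq_mono _ _ (fun m hm => by simp at hm ⊢; exact hm.1) M
      have h2 : QtyBidAsk b a M ≤ QtyAsk a M := by
        rw [QtyBidAsk_eq_Sq, QtyAsk_eq_Sq]
        exact Sq_mono _ _ (fun m hm => by simp at hm ⊢; exact hm.2) M
      have h3 := hM.2.2.2.1 b (List.mem_cons_self ..)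
      have h4 := hM.2.2.2.2 a (List.mem_cons_self ..)
      omega
    exact ⟨M, hM, rfl, by omega⟩
  | succ n ih =>
    intro M hM hb hn
    have hle : QtyBidAsk b a M ≤ min b.quantity a.quantity := by
      have h1 : QtyBidAsk b a M ≤ QtyBid b M := by
        rw [QtyBidAsk_eq_Sq, QtyBid_eq_Sq]
        exact Sq_mono _ _ (fun m hm => by simp at hm ⊢; exact hm.1) M
      have h2 : QtyBidAsk b a M ≤ QtyAsk a M := by
        rw [QtyBidAsk_eq_Sq, QtyAsk_eq_Sq]
        exact Sq_mono _ _ (fun m hm => by simp at hm ⊢; exact hm.2) M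
      have h3 := hM.2.2.2.1 b (List.mem_cons_self ..)
      have h4 := hM.2.2.2.2 a (List.mem_cons_self ..)
      omega
    by_cases h : QtyBidAsk b a M = min b.quantity a.quantity
    · exact ⟨M, hM, rfl, h⟩
    · have hlt : QtyBidAsk b a M < min b.quantity a.quantity := lt_of_le_of_ne hle h
      obtain ⟨M₂, h1, h2, h3, h4⟩ := step_lemma b B' a A' M hA hp hM hlt hb
      obtain ⟨M'', g1, g2, g3⟩ := ih M₂ h1 (by omega) (by omega)
      exact ⟨M'', g1, by omega, g3⟩
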